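/- Let g : R^n → R be C¹, M = {z : g(z) = 0} a level set, and z̄ ∈ M with ∇g(z̄) ≠ 0. Suppose sequences (q_k) ⊂ M and (z_k) converge to z̄ with z_k ≠ q_k and z_k in the tangent hyperplane T_M(q_k) = {z : ⟨∇g(q_k), z − q_k⟩ = 0}. Then dist(z_k, M)/‖z_k − q_k‖ → 0. -/

import Mathlib

open Metric Filter Topology

lemma aux_line_deriv {n : ℕ} (g : EuclideanSpace ℝ (Fin n) → ℝ) (hg : ContDiff ℝ 1 g)
    (x v : EuclideanSpace ℝ (Fin n)) (t : ℝ) :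
    HasDerivAt (fun s : ℝ => g (x + s • v))
      (inner ℝ (gradient g (x + t • v)) v : ℝ) t := by
  have hline : HasDerivAt (fun s : ℝ => x + s • v) v t := by
    simpa using ((hasDerivAt_id t).smul_const v).const_add x
  have hgd := ((hg.differentiable one_ne_zero) (x + t • v)).hasFDerivAt
  have h := hgd.comp_hasDerivAt t hline
  rw [gradient, InnerProductSpace.toDual_symm_apply]
  exact h

lemma aux_root {n : ℕ} (g : EuclideanSpace ℝ (Fin n) → ℝ) (hg : ContDiff ℝ 1 g)
    (v : EuclideanSpace ℝ (Fin n)) (hv : ‖v‖ = 1) (x : EuclideanSpace ℝ (Fin n))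
    (c δ : ℝ) (hc : 0 < c) (hδ : 0 < δ)
    (hlow : ∀ t : ℝ, |t| ≤ δ → c ≤ (inner ℝ (gradient g (x + t • v)) v : ℝ))
    (hgx : |g x| ≤ c * δ / 2) :
    ∃ y, g y = 0 ∧ ‖y - x‖ ≤ 2 / c * |g x| := by
  by_cases hgx0 : g x = 0
  · exact ⟨x, hgx0, by simp [hgx0, abs_nonneg]⟩
  set T : ℝ := 2 / c * |g x| with hT_def
  have habs : 0 < |g x| := abs_pos.mpr hgx0
  have hT : 0 < T := mul_pos (div_pos two_pos hc) habs
  have hTδ : T ≤ δ := by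
    have : 2 / c * |g x| ≤ 2 / c * (c * δ / 2) :=
      mul_le_mul_of_nonneg_left hgx (le_of_lt (div_pos two_pos hc))
    calc T ≤ 2 / c * (c * δ / 2) := this
      _ = δ := by field_simp
  have hcT : c * T = 2 * |g x| := by
    rw [hT_def]; field_simp
  set φ : ℝ → ℝ := fun t => g (x + t • v) with hφ_def
  have contφ : Continuous φ :=
    hg.continuous.comp (by continuity)
  -- upper bound on [0, T]
  have hφT : |g x| ≤ φ T := by
    obtain ⟨ξ, hξ, hslope⟩ := exists_hasDerivAt_eq_slope φ
      (fun s => (inner ℝ (gradient g (x + s • v)) v : ℝ)) hT contφ.continuousOn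
      (fun s _ => aux_line_deriv g hg x v s)
    have hξδ : |ξ| ≤ δ := by
      rw [abs_le]; constructor <;> [linarith [hξ.1]; linarith [hξ.2, hTδ]]
    have hge : c ≤ (φ T - φ 0) / (T - 0) := by
      rw [← hslope]; exact hlow ξ hξδ
    have hφ0 : φ 0 = g x := by simp [hφ_def]
    rw [hφ0, sub_zero] at hge
    have : c * T ≤ φ T - g x := (le_div_iff₀ hT).mp hge
    have habs' : -|g x| ≤ g x := neg_abs_le _
    linarith [hcT ▸ this]
  -- lower bound at -T
  have hφmT : φ (-T) ≤ -|g x| := by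
    have hlt : (-T : ℝ) < 0 := neg_neg_iff_pos.mpr hT
    obtain ⟨ξ, hξ, hslope⟩ := exists_hasDerivAt_eq_slope φ
      (fun s => (inner ℝ (gradient g (x + s • v)) v : ℝ)) hlt contφ.continuousOn
      (fun s _ => aux_line_deriv g hg x v s)
    have hξδ : |ξ| ≤ δ := by
      rw [abs_le]; constructor <;> [linarith [hξ.1, hTδ]; linarith [hξ.2]]
    have hge : c ≤ (φ 0 - φ (-T)) / (0 - (-T)) := by
      rw [← hslope]; exact hlow ξ hξδ
    have hφ0 : φ 0 = g x := by simp [hφ_def]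
    rw [hφ0] at hge
    have h0T : (0 : ℝ) - (-T) = T := by ring
    rw [h0T] at hge
    have : c * T ≤ g x - φ (-T) := by nlinarith [(le_div_iff₀ hT).mp hge]
    have habs' : g x ≤ |g x| := le_abs_self _
    linarith [hcT ▸ this]
  -- intermediate value theorem
  have hmem : (0 : ℝ) ∈ Set.Icc (φ (-T)) (φ T) := by
    constructor <;> linarith [abs_nonneg (g x)]
  have hsub := intermediate_value_Icc (by linarith : (-T : ℝ) ≤ T) contφ.continuousOn
  obtain ⟨t, ht, hφt⟩ := hsub hmem
  refine ⟨x + t • v, hφt, ?_⟩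
  have : ‖x + t • v - x‖ = |t| := by
    simp [norm_smul, hv]
  rw [this]
  exact abs_le.mpr ⟨ht.1, ht.2⟩

/-- Tangency limit to the manifold. -/
theorem stmt11 {n : ℕ} (g : EuclideanSpace ℝ (Fin n) → ℝ) (hg : ContDiff ℝ 1 g)
    (M : Set (EuclideanSpace ℝ (Fin n))) (hM : M = {z | g z = 0})
    (zbar : EuclideanSpace ℝ (Fin n)) (hzbar : zbar ∈ M) (hgrad : gradient g zbar ≠ 0)
    (q z : ℕ → EuclideanSpace ℝ (Fin n))
    (hqM : ∀ k, q k ∈ M)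
    (hq : Tendsto q atTop (nhds zbar)) (hz : Tendsto z atTop (nhds zbar))
    (hne : ∀ k, z k ≠ q k)
    (htangent : ∀ k, inner ℝ (gradient g (q k)) (z k - q k) = (0 : ℝ)) :
    Tendsto (fun k => Metric.infDist (z k) M / ‖z k - q k‖) atTop (nhds 0) := by
  set G : EuclideanSpace ℝ (Fin n) → EuclideanSpace ℝ (Fin n) := fun x => gradient g x with hG_def
  have contG : Continuous G := by
    have h1 : Continuous (fderiv ℝ g) := hg.continuous_fderiv one_ne_zero
    exact (InnerProductSpace.toDual ℝ (EuclideanSpace ℝ (Fin n))).symm.continuous.comp h1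
  have hgq : ∀ k, g (q k) = 0 := fun k => by have := hqM k; rwa [hM] at this
  have hgzbar : g zbar = 0 := by rwa [hM] at hzbar
  -- Part A : mean value theorem points
  have hA : ∀ k, ∃ w : EuclideanSpace ℝ (Fin n), g (z k) = (inner ℝ (G w - G (q k)) (z k - q k) : ℝ) ∧
      ‖w - zbar‖ ≤ ‖q k - zbar‖ + ‖z k - zbar‖ := by
    intro k
    obtain ⟨t, ht, hslope⟩ := exists_hasDerivAt_eq_slope
      (fun s : ℝ => g (q k + s • (z k - q k)))
      (fun s => (inner ℝ (gradient g (q k + s • (z k - q k))) (z k - q k) : ℝ))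
      one_pos (hg.continuous.comp (by continuity)).continuousOn
      (fun s _ => aux_line_deriv g hg (q k) (z k - q k) s)
    refine ⟨q k + t • (z k - q k), ?_, ?_⟩
    · have h1 : q k + (1 : ℝ) • (z k - q k) = z k := by simp
      have h0 : q k + (0 : ℝ) • (z k - q k) = q k := by simp
      have hslope' : (inner ℝ (gradient g (q k + t • (z k - q k))) (z k - q k) : ℝ)
          = g (z k) := by
        rw [hslope, h1, h0, hgq k]; norm_num
      simp only [hG_def, inner_sub_left, htangent k, sub_zero, ← hslope']
    · have : q k + t • (z k - q k) - zbar
          = (q k - zbar) + t • (z k - zbar) - t • (q k - zbar) := by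
        module
      rw [this]
      have ht0 : 0 ≤ t := le_of_lt ht.1
      have ht1 : t ≤ 1 := le_of_lt ht.2
      calc ‖(q k - zbar) + t • (z k - zbar) - t • (q k - zbar)‖
          ≤ ‖(q k - zbar) - t • (q k - zbar)‖ + ‖t • (z k - zbar)‖ := by
            rw [show (q k - zbar) + t • (z k - zbar) - t • (q k - zbar)
              = ((q k - zbar) - t • (q k - zbar)) + t • (z k - zbar) by abel]
            exact norm_add_le _ _
        _ ≤ ‖q k - zbar‖ + ‖z k - zbar‖ := by
            rw [show (q k - zbar) - t • (q k - zbar) = (1 - t) • (q k - zbar) by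
              rw [sub_smul, one_smul]]
            rw [norm_smul, norm_smul]
            have h1t : ‖(1 - t : ℝ)‖ ≤ 1 := by
              rw [Real.norm_eq_abs, abs_le]; constructor <;> linarith
            have h2t : ‖(t : ℝ)‖ ≤ 1 := by
              rw [Real.norm_eq_abs, abs_le]; constructor <;> linarith
            exact add_le_add
              (by nlinarith [norm_nonneg (q k - zbar), norm_nonneg (1 - t : ℝ)])
              (by nlinarith [norm_nonneg (z k - zbar), norm_nonneg (t : ℝ)])
  choose w hw hwnorm using hA
  -- w tends to zbar
  have hw_tendsto : Tendsto w atTop (nhds zbar) := by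
    rw [tendsto_iff_norm_sub_tendsto_zero]
    apply squeeze_zero (fun k => norm_nonneg _) hwnorm
    have h1 : Tendsto (fun k => ‖q k - zbar‖) atTop (nhds 0) :=
      tendsto_iff_norm_sub_tendsto_zero.mp hq
    have h2 : Tendsto (fun k => ‖z k - zbar‖) atTop (nhds 0) :=
      tendsto_iff_norm_sub_tendsto_zero.mp hz
    simpa using h1.add h2
  -- epsilon sequence
  set ε : ℕ → ℝ := fun k => ‖G (w k) - G (q k)‖ with hε_def
  have hε_tendsto : Tendsto ε atTop (nhds 0) := by
    have h1 : Tendsto (fun k => G (w k)) atTop (nhds (G zbar)) :=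
      (contG.tendsto zbar).comp hw_tendsto
    have h2 : Tendsto (fun k => G (q k)) atTop (nhds (G zbar)) :=
      (contG.tendsto zbar).comp hq
    have := (h1.sub h2).norm
    simpa using this
  have hgz_bound : ∀ k, |g (z k)| ≤ ε k * ‖z k - q k‖ := by
    intro k
    rw [hw k]
    exact abs_real_inner_le_norm _ _
  -- setup direction and constant
  set c0 : ℝ := ‖G zbar‖ with hc0_def
  have hc0 : 0 < c0 := norm_pos_iff.mpr hgrad
  set v : EuclideanSpace ℝ (Fin n) := c0⁻¹ • G zbar with hv_def
  have hv : ‖v‖ = 1 := by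
    rw [hv_def, norm_smul, norm_inv, Real.norm_eq_abs, abs_of_pos hc0]
    field_simp
    rfl
  have hinner_zbar : (inner ℝ (G zbar) v : ℝ) = c0 := by
    rw [hv_def, real_inner_smul_right, real_inner_self_eq_norm_sq]
    rw [hc0_def]
    field_simp
  set c : ℝ := c0 / 2 with hc_def
  have hc : 0 < c := by positivity
  -- find δ
  have hcont_inner : Continuous (fun x : EuclideanSpace ℝ (Fin n) => (inner ℝ (G x) v : ℝ)) :=
    (contG.inner continuous_const)
  have hopen : IsOpen {x : EuclideanSpace ℝ (Fin n) | c < (inner ℝ (G x) v : ℝ)} :=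
    isOpen_lt continuous_const hcont_inner
  have hzbar_mem : zbar ∈ {x : EuclideanSpace ℝ (Fin n) | c < (inner ℝ (G x) v : ℝ)} := by
    simp only [Set.mem_setOf_eq, hinner_zbar]
    linarith
  obtain ⟨r, hr, hball⟩ := Metric.isOpen_iff.mp hopen zbar hzbar_mem
  set δ : ℝ := r / 3 with hδ_def
  have hδ : 0 < δ := by positivity
  have hlow : ∀ x : EuclideanSpace ℝ (Fin n), ‖x - zbar‖ ≤ δ → ∀ t : ℝ, |t| ≤ δ →
      c ≤ (inner ℝ (G (x + t • v)) v : ℝ) := by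
    intro x hx t htle
    have : x + t • v ∈ ball zbar r := by
      rw [mem_ball, dist_eq_norm]
      have : x + t • v - zbar = (x - zbar) + t • v := by abel
      rw [this]
      calc ‖(x - zbar) + t • v‖ ≤ ‖x - zbar‖ + ‖t • v‖ := norm_add_le _ _
        _ ≤ δ + δ := by
            rw [norm_smul, hv, mul_one, Real.norm_eq_abs]
            exact add_le_add hx htle
        _ < r := by rw [hδ_def]; linarith
    exact le_of_lt (hball this)
  -- eventual upper bound
  have hub : ∀ᶠ k in atTop, Metric.infDist (z k) M / ‖z k - q k‖ ≤ 2 / c * ε k := by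
    have hev1 : ∀ᶠ k in atTop, ‖z k - zbar‖ ≤ δ := by
      have := tendsto_iff_norm_sub_tendsto_zero.mp hz
      exact (this.eventually (eventually_le_nhds hδ))
    have hgz_tendsto : Tendsto (fun k => g (z k)) atTop (nhds 0) := by
      have := (hg.continuous.tendsto zbar).comp hz
      rwa [hgzbar] at this
    have hev2 : ∀ᶠ k in atTop, |g (z k)| ≤ c * δ / 2 := by
      have hpos : (0 : ℝ) < c * δ / 2 := by positivity
      have := hgz_tendsto.abs
      simpa using this.eventually (eventually_le_nhds (by simpa using hpos))
    filter_upwards [hev1, hev2] with k h1 h2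
    obtain ⟨y, hy0, hyx⟩ := aux_root g hg v hv (z k) c δ hc hδ
      (fun t htle => hlow (z k) h1 t htle) h2
    have hyM : y ∈ M := by rw [hM]; exact hy0
    have hdist : Metric.infDist (z k) M ≤ 2 / c * |g (z k)| := by
      calc Metric.infDist (z k) M ≤ dist (z k) y := Metric.infDist_le_dist_of_mem hyM
        _ = ‖y - z k‖ := by rw [dist_eq_norm, norm_sub_rev]
        _ ≤ 2 / c * |g (z k)| := hyx
    have hnorm_pos : 0 < ‖z k - q k‖ := by
      rw [norm_pos_iff, sub_ne_zero]; exact hne k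
    rw [div_le_iff₀ hnorm_pos]
    calc Metric.infDist (z k) M ≤ 2 / c * |g (z k)| := hdist
      _ ≤ 2 / c * (ε k * ‖z k - q k‖) := by
          apply mul_le_mul_of_nonneg_left (hgz_bound k)
          positivity
      _ = 2 / c * ε k * ‖z k - q k‖ := by ring
  -- conclude by squeeze
  have hlim : Tendsto (fun k => 2 / c * ε k) atTop (nhds 0) := by
    have := hε_tendsto.const_mul (2 / c)
    simpa using this
  apply squeeze_zero' ?_ hub hlim
  filter_upwards with k
  exact div_nonneg Metric.infDist_nonneg (norm_nonneg _)
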